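/- Let n ≥ 1, let ρ be a density matrix indexed by Fin n × Fin n, let U, V be n × n unitary matrices, and let Φ_U(X) = U X U* and Φ_V(X) = V X V* be the associated unitary channels. Then there exists a density matrix σ indexed by Fin n × Fin n × Fin n with Tr₃ σ = (id ⊗ Φ_U)(ρ) and Tr₂ σ = (id ⊗ Φ_V)(ρ) if and only if there exists a density matrix σ' indexed by Fin n × Fin n × Fin n with Tr₃ σ' = ρ and Tr₂ σ' = ρ; i.e., ρ is steerable by the unitary channels Φ_U, Φ_V if and only if it is steerable by two copies of the identity channel. -/

import Mathlib

open Matrix BigOperators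
open scoped ComplexOrder

noncomputable section

/-- A density matrix: positive semidefinite with trace 1. -/
def IsDensity {ι : Type*} [Fintype ι] (M : Matrix ι ι ℂ) : Prop :=
  M.PosSemidef ∧ M.trace = 1

/-- The Choi matrix of a linear map between matrix spaces, indexed by (output × input). -/
def choi {ι κ : Type*} [Fintype ι] [DecidableEq ι]
    (Φ : Matrix ι ι ℂ →ₗ[ℂ] Matrix κ κ ℂ) : Matrix (κ × ι) (κ × ι) ℂ :=
  fun p q => Φ (Matrix.single p.2 q.2 1) p.1 q.1

/-- A quantum channel: trace preserving with positive semidefinite Choi matrix. -/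
def IsQChannel {ι κ : Type*} [Fintype ι] [DecidableEq ι] [Fintype κ]
    (Φ : Matrix ι ι ℂ →ₗ[ℂ] Matrix κ κ ℂ) : Prop :=
  (∀ X, (Φ X).trace = X.trace) ∧ (choi Φ).PosSemidef

/-- The tensor product `Φ ⊗ Ψ` of maps on matrix spaces, determined by
`(Φ ⊗ Ψ)(X ⊗ₖ Y) = (Φ X) ⊗ₖ (Ψ Y)`. -/
def tmap {α β γ δ : Type*} [Fintype α] [DecidableEq α] [Fintype γ] [DecidableEq γ]
    (Φ : Matrix α α ℂ → Matrix β β ℂ) (Ψ : Matrix γ γ ℂ → Matrix δ δ ℂ)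
    (M : Matrix (α × γ) (α × γ) ℂ) : Matrix (β × δ) (β × δ) ℂ :=
  fun p q => ∑ a, ∑ a', ∑ c, ∑ c', M (a, c) (a', c') *
    (Φ (Matrix.single a a' 1) p.1 q.1 * Ψ (Matrix.single c c' 1) p.2 q.2)

/-- Partial trace over the second factor of a bipartite matrix. -/
def ptr2 {α β : Type*} [Fintype β] (M : Matrix (α × β) (α × β) ℂ) : Matrix α α ℂ :=
  fun a a' => ∑ b, M (a, b) (a', b)

/-- Partial trace over the first factor of a bipartite matrix. -/
def ptr1 {α β : Type*} [Fintype α] (M : Matrix (α × β) (α × β) ℂ) : Matrix β β ℂ :=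
  fun b b' => ∑ a, M (a, b) (a, b')

/-- Compatibility of two quantum channels: they arise as the two marginals of a single
channel into the tensor product. -/
def Compatible {n : ℕ} (Φ₁ Φ₂ : Matrix (Fin n) (Fin n) ℂ →ₗ[ℂ] Matrix (Fin n) (Fin n) ℂ) : Prop :=
  ∃ Φ : Matrix (Fin n) (Fin n) ℂ →ₗ[ℂ] Matrix (Fin n × Fin n) (Fin n × Fin n) ℂ,
    IsQChannel Φ ∧ ∀ ρ : Matrix (Fin n) (Fin n) ℂ, IsDensity ρ →
      ptr2 (Φ ρ) = Φ₁ ρ ∧ ptr1 (Φ ρ) = Φ₂ ρ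

/-- Partial trace over the third factor of a tripartite matrix. -/
def ptrace3 {α β γ : Type*} [Fintype γ] (M : Matrix (α × β × γ) (α × β × γ) ℂ) :
    Matrix (α × β) (α × β) ℂ :=
  fun p q => ∑ c, M (p.1, p.2, c) (q.1, q.2, c)

/-- Partial trace over the second factor of a tripartite matrix. -/
def ptrace2 {α β γ : Type*} [Fintype β] (M : Matrix (α × β × γ) (α × β × γ) ℂ) :
    Matrix (α × γ) (α × γ) ℂ :=
  fun p q => ∑ b, M (p.1, b, p.2) (q.1, b, q.2)


open Kronecker

section Aux

variable {n : ℕ}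

private lemma kron_conjT {αt βt : Type*} (A : Matrix αt αt ℂ) (B : Matrix βt βt ℂ) :
    (A ⊗ₖ B)ᴴ = Aᴴ ⊗ₖ Bᴴ := by
  ext ⟨i,j⟩ ⟨k,l⟩
  simp [conjTranspose_apply, kroneckerMap_apply]

private lemma ptrace3_mulA_left (A : Matrix (Fin n) (Fin n) ℂ)
    (M : Matrix (Fin n × Fin n × Fin n) (Fin n × Fin n × Fin n) ℂ) :
    ptrace3 (((1 : Matrix (Fin n) (Fin n) ℂ) ⊗ₖ (A ⊗ₖ (1 : Matrix (Fin n) (Fin n) ℂ))) * M)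
      = ((1 : Matrix (Fin n) (Fin n) ℂ) ⊗ₖ A) * ptrace3 M := by
  ext ⟨a,b⟩ ⟨a',b'⟩
  simp only [ptrace3, Matrix.mul_apply, kroneckerMap_apply, one_apply, Fintype.sum_prod_type,
    ite_mul, mul_ite, one_mul, mul_one, zero_mul, mul_zero, Finset.sum_ite_eq, Finset.sum_ite_eq',
    Finset.sum_ite_irrel, Finset.sum_const_zero, Finset.mem_univ, if_true, Finset.mul_sum]
  exact Finset.sum_comm

private lemma ptrace3_mulA_right (A : Matrix (Fin n) (Fin n) ℂ)
    (M : Matrix (Fin n × Fin n × Fin n) (Fin n × Fin n × Fin n) ℂ) :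
    ptrace3 (M * ((1 : Matrix (Fin n) (Fin n) ℂ) ⊗ₖ (A ⊗ₖ (1 : Matrix (Fin n) (Fin n) ℂ))))
      = ptrace3 M * ((1 : Matrix (Fin n) (Fin n) ℂ) ⊗ₖ A) := by
  ext ⟨a,b⟩ ⟨a',b'⟩
  simp only [ptrace3, Matrix.mul_apply, kroneckerMap_apply, one_apply, Fintype.sum_prod_type,
    ite_mul, mul_ite, one_mul, mul_one, zero_mul, mul_zero, Finset.sum_ite_eq, Finset.sum_ite_eq',
    Finset.sum_ite_irrel, Finset.sum_const_zero, Finset.mem_univ, if_true, Finset.sum_mul]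
  exact Finset.sum_comm

private lemma ptrace3_comm (B : Matrix (Fin n) (Fin n) ℂ)
    (M : Matrix (Fin n × Fin n × Fin n) (Fin n × Fin n × Fin n) ℂ) :
    ptrace3 (((1 : Matrix (Fin n) (Fin n) ℂ) ⊗ₖ ((1 : Matrix (Fin n) (Fin n) ℂ) ⊗ₖ B)) * M)
      = ptrace3 (M * ((1 : Matrix (Fin n) (Fin n) ℂ) ⊗ₖ ((1 : Matrix (Fin n) (Fin n) ℂ) ⊗ₖ B))) := by
  ext ⟨a,b⟩ ⟨a',b'⟩
  simp only [ptrace3, Matrix.mul_apply, kroneckerMap_apply, one_apply, Fintype.sum_prod_type,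
    ite_mul, mul_ite, one_mul, mul_one, zero_mul, mul_zero, Finset.sum_ite_eq, Finset.sum_ite_eq',
    Finset.sum_ite_irrel, Finset.sum_const_zero, Finset.mem_univ, if_true]
  conv_rhs => rw [Finset.sum_comm]
  simp [mul_comm]

private lemma ptrace2_mulB_left (B : Matrix (Fin n) (Fin n) ℂ)
    (M : Matrix (Fin n × Fin n × Fin n) (Fin n × Fin n × Fin n) ℂ) :
    ptrace2 (((1 : Matrix (Fin n) (Fin n) ℂ) ⊗ₖ ((1 : Matrix (Fin n) (Fin n) ℂ) ⊗ₖ B)) * M)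
      = ((1 : Matrix (Fin n) (Fin n) ℂ) ⊗ₖ B) * ptrace2 M := by
  ext ⟨a,c⟩ ⟨a',c'⟩
  simp only [ptrace2, Matrix.mul_apply, kroneckerMap_apply, one_apply, Fintype.sum_prod_type,
    ite_mul, mul_ite, one_mul, mul_one, zero_mul, mul_zero, Finset.sum_ite_eq, Finset.sum_ite_eq',
    Finset.sum_ite_irrel, Finset.sum_const_zero, Finset.mem_univ, if_true, Finset.mul_sum]
  exact Finset.sum_comm

private lemma ptrace2_mulB_right (B : Matrix (Fin n) (Fin n) ℂ)
    (M : Matrix (Fin n × Fin n × Fin n) (Fin n × Fin n × Fin n) ℂ) :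
    ptrace2 (M * ((1 : Matrix (Fin n) (Fin n) ℂ) ⊗ₖ ((1 : Matrix (Fin n) (Fin n) ℂ) ⊗ₖ B)))
      = ptrace2 M * ((1 : Matrix (Fin n) (Fin n) ℂ) ⊗ₖ B) := by
  ext ⟨a,c⟩ ⟨a',c'⟩
  simp only [ptrace2, Matrix.mul_apply, kroneckerMap_apply, one_apply, Fintype.sum_prod_type,
    ite_mul, mul_ite, one_mul, mul_one, zero_mul, mul_zero, Finset.sum_ite_eq, Finset.sum_ite_eq',
    Finset.sum_ite_irrel, Finset.sum_const_zero, Finset.mem_univ, if_true, Finset.sum_mul]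
  exact Finset.sum_comm

private lemma ptrace2_comm (A : Matrix (Fin n) (Fin n) ℂ)
    (M : Matrix (Fin n × Fin n × Fin n) (Fin n × Fin n × Fin n) ℂ) :
    ptrace2 (((1 : Matrix (Fin n) (Fin n) ℂ) ⊗ₖ (A ⊗ₖ (1 : Matrix (Fin n) (Fin n) ℂ))) * M)
      = ptrace2 (M * ((1 : Matrix (Fin n) (Fin n) ℂ) ⊗ₖ (A ⊗ₖ (1 : Matrix (Fin n) (Fin n) ℂ)))) := by
  ext ⟨a,c⟩ ⟨a',c'⟩
  simp only [ptrace2, Matrix.mul_apply, kroneckerMap_apply, one_apply, Fintype.sum_prod_type,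
    ite_mul, mul_ite, one_mul, mul_one, zero_mul, mul_zero, Finset.sum_ite_eq, Finset.sum_ite_eq',
    Finset.sum_ite_irrel, Finset.sum_const_zero, Finset.mem_univ, if_true]
  conv_rhs => rw [Finset.sum_comm]
  simp [mul_comm]

private lemma tmap_eq (A : Matrix (Fin n) (Fin n) ℂ)
    (M : Matrix (Fin n × Fin n) (Fin n × Fin n) ℂ) :
    tmap id (fun X => A * X * Aᴴ) M
      = ((1 : Matrix (Fin n) (Fin n) ℂ) ⊗ₖ A) * M * ((1 : Matrix (Fin n) (Fin n) ℂ) ⊗ₖ A)ᴴ := by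
  ext ⟨p1,p2⟩ ⟨q1,q2⟩
  simp only [tmap, id_eq, Matrix.mul_apply, Matrix.conjTranspose_apply, kroneckerMap_apply,
    one_apply, Matrix.single, Matrix.of_apply, Fintype.sum_prod_type,
    ite_mul, mul_ite, one_mul, mul_one, zero_mul, mul_zero,
    Finset.sum_ite_irrel, Finset.sum_const_zero, Finset.sum_ite_eq, Finset.sum_ite_eq',
    Finset.mem_univ, if_true, Finset.mul_sum, Finset.sum_mul, star_zero, star_one,
    star_mul', ite_and, ite_self]
  simp only [apply_ite (star : ℂ → ℂ), star_zero, ite_mul, mul_ite, mul_zero, zero_mul,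
    Finset.sum_ite_irrel, Finset.sum_const_zero, Finset.sum_ite_eq, Finset.sum_ite_eq',
    Finset.mem_univ, if_true]
  rw [Finset.sum_comm]
  exact Finset.sum_congr rfl fun x _ => Finset.sum_congr rfl fun y _ => by ring

private lemma kron_split (A B : Matrix (Fin n) (Fin n) ℂ) :
    (1 : Matrix (Fin n) (Fin n) ℂ) ⊗ₖ (A ⊗ₖ B)
      = ((1 : Matrix (Fin n) (Fin n) ℂ) ⊗ₖ (A ⊗ₖ (1 : Matrix (Fin n) (Fin n) ℂ)))
        * ((1 : Matrix (Fin n) (Fin n) ℂ) ⊗ₖ ((1 : Matrix (Fin n) (Fin n) ℂ) ⊗ₖ B)) := by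
  rw [← Matrix.mul_kronecker_mul, ← Matrix.mul_kronecker_mul]
  simp

private lemma ptrace3_kron_conj (A B : Matrix (Fin n) (Fin n) ℂ) (hB : Bᴴ * B = 1)
    (M : Matrix (Fin n × Fin n × Fin n) (Fin n × Fin n × Fin n) ℂ) :
    ptrace3 (((1 : Matrix (Fin n) (Fin n) ℂ) ⊗ₖ (A ⊗ₖ B)) * M
        * ((1 : Matrix (Fin n) (Fin n) ℂ) ⊗ₖ (A ⊗ₖ B))ᴴ)
      = ((1 : Matrix (Fin n) (Fin n) ℂ) ⊗ₖ A) * ptrace3 M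
          * ((1 : Matrix (Fin n) (Fin n) ℂ) ⊗ₖ A)ᴴ := by
  have hT : ((1 : Matrix (Fin n) (Fin n) ℂ) ⊗ₖ (A ⊗ₖ B))ᴴ
      = ((1 : Matrix (Fin n) (Fin n) ℂ) ⊗ₖ ((1 : Matrix (Fin n) (Fin n) ℂ) ⊗ₖ Bᴴ))
        * ((1 : Matrix (Fin n) (Fin n) ℂ) ⊗ₖ (Aᴴ ⊗ₖ (1 : Matrix (Fin n) (Fin n) ℂ))) := by
    rw [kron_conjT, kron_conjT, ← Matrix.mul_kronecker_mul, ← Matrix.mul_kronecker_mul]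
    simp
  rw [hT, kron_split]
  have e1 : ((1 : Matrix (Fin n) (Fin n) ℂ) ⊗ₖ (A ⊗ₖ (1 : Matrix (Fin n) (Fin n) ℂ))) * ((1 : Matrix (Fin n) (Fin n) ℂ) ⊗ₖ ((1 : Matrix (Fin n) (Fin n) ℂ) ⊗ₖ B)) * M * (((1 : Matrix (Fin n) (Fin n) ℂ) ⊗ₖ ((1 : Matrix (Fin n) (Fin n) ℂ) ⊗ₖ Bᴴ)) * ((1 : Matrix (Fin n) (Fin n) ℂ) ⊗ₖ (Aᴴ ⊗ₖ (1 : Matrix (Fin n) (Fin n) ℂ))))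
      = ((1 : Matrix (Fin n) (Fin n) ℂ) ⊗ₖ (A ⊗ₖ (1 : Matrix (Fin n) (Fin n) ℂ))) * ((((1 : Matrix (Fin n) (Fin n) ℂ) ⊗ₖ ((1 : Matrix (Fin n) (Fin n) ℂ) ⊗ₖ B)) * (M * ((1 : Matrix (Fin n) (Fin n) ℂ) ⊗ₖ ((1 : Matrix (Fin n) (Fin n) ℂ) ⊗ₖ Bᴴ)))) * ((1 : Matrix (Fin n) (Fin n) ℂ) ⊗ₖ (Aᴴ ⊗ₖ (1 : Matrix (Fin n) (Fin n) ℂ)))) := by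
    noncomm_ring
  rw [e1, ptrace3_mulA_left, ptrace3_mulA_right, ptrace3_comm, Matrix.mul_assoc,
    Matrix.mul_assoc, ← Matrix.mul_kronecker_mul, ← Matrix.mul_kronecker_mul, hB]
  simp [Matrix.one_kronecker_one, kron_conjT, Matrix.mul_assoc]

private lemma ptrace2_kron_conj (A B : Matrix (Fin n) (Fin n) ℂ) (hA : Aᴴ * A = 1)
    (M : Matrix (Fin n × Fin n × Fin n) (Fin n × Fin n × Fin n) ℂ) :
    ptrace2 (((1 : Matrix (Fin n) (Fin n) ℂ) ⊗ₖ (A ⊗ₖ B)) * M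
        * ((1 : Matrix (Fin n) (Fin n) ℂ) ⊗ₖ (A ⊗ₖ B))ᴴ)
      = ((1 : Matrix (Fin n) (Fin n) ℂ) ⊗ₖ B) * ptrace2 M
          * ((1 : Matrix (Fin n) (Fin n) ℂ) ⊗ₖ B)ᴴ := by
  have hsplit : (1 : Matrix (Fin n) (Fin n) ℂ) ⊗ₖ (A ⊗ₖ B)
      = ((1 : Matrix (Fin n) (Fin n) ℂ) ⊗ₖ ((1 : Matrix (Fin n) (Fin n) ℂ) ⊗ₖ B))
        * ((1 : Matrix (Fin n) (Fin n) ℂ) ⊗ₖ (A ⊗ₖ (1 : Matrix (Fin n) (Fin n) ℂ))) := by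
    rw [← Matrix.mul_kronecker_mul, ← Matrix.mul_kronecker_mul]
    simp
  have hT : ((1 : Matrix (Fin n) (Fin n) ℂ) ⊗ₖ (A ⊗ₖ B))ᴴ
      = ((1 : Matrix (Fin n) (Fin n) ℂ) ⊗ₖ (Aᴴ ⊗ₖ (1 : Matrix (Fin n) (Fin n) ℂ)))
        * ((1 : Matrix (Fin n) (Fin n) ℂ) ⊗ₖ ((1 : Matrix (Fin n) (Fin n) ℂ) ⊗ₖ Bᴴ)) := by
    rw [kron_conjT, kron_conjT, ← Matrix.mul_kronecker_mul, ← Matrix.mul_kronecker_mul]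
    simp
  rw [hT, hsplit]
  have e1 : ((1 : Matrix (Fin n) (Fin n) ℂ) ⊗ₖ ((1 : Matrix (Fin n) (Fin n) ℂ) ⊗ₖ B)) * ((1 : Matrix (Fin n) (Fin n) ℂ) ⊗ₖ (A ⊗ₖ (1 : Matrix (Fin n) (Fin n) ℂ))) * M * (((1 : Matrix (Fin n) (Fin n) ℂ) ⊗ₖ (Aᴴ ⊗ₖ (1 : Matrix (Fin n) (Fin n) ℂ))) * ((1 : Matrix (Fin n) (Fin n) ℂ) ⊗ₖ ((1 : Matrix (Fin n) (Fin n) ℂ) ⊗ₖ Bᴴ)))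
      = ((1 : Matrix (Fin n) (Fin n) ℂ) ⊗ₖ ((1 : Matrix (Fin n) (Fin n) ℂ) ⊗ₖ B)) * ((((1 : Matrix (Fin n) (Fin n) ℂ) ⊗ₖ (A ⊗ₖ (1 : Matrix (Fin n) (Fin n) ℂ))) * (M * ((1 : Matrix (Fin n) (Fin n) ℂ) ⊗ₖ (Aᴴ ⊗ₖ (1 : Matrix (Fin n) (Fin n) ℂ))))) * ((1 : Matrix (Fin n) (Fin n) ℂ) ⊗ₖ ((1 : Matrix (Fin n) (Fin n) ℂ) ⊗ₖ Bᴴ))) := by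
    noncomm_ring
  rw [e1, ptrace2_mulB_left, ptrace2_mulB_right, ptrace2_comm, Matrix.mul_assoc,
    Matrix.mul_assoc, ← Matrix.mul_kronecker_mul, ← Matrix.mul_kronecker_mul, hA]
  simp [Matrix.one_kronecker_one, kron_conjT, Matrix.mul_assoc]

private lemma kron3_unitary (A B : Matrix (Fin n) (Fin n) ℂ) (hA : Aᴴ * A = 1)
    (hB : Bᴴ * B = 1) :
    ((1 : Matrix (Fin n) (Fin n) ℂ) ⊗ₖ (A ⊗ₖ B))ᴴ
      * ((1 : Matrix (Fin n) (Fin n) ℂ) ⊗ₖ (A ⊗ₖ B)) = 1 := by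
  rw [kron_conjT, kron_conjT, ← Matrix.mul_kronecker_mul, ← Matrix.mul_kronecker_mul, hA, hB]
  simp [Matrix.one_kronecker_one]

private lemma isDensity_conj {ι : Type*} [Fintype ι] [DecidableEq ι]
    (W M : Matrix ι ι ℂ) (hW : Wᴴ * W = 1) (hM : IsDensity M) :
    IsDensity (W * M * Wᴴ) := by
  refine ⟨hM.1.mul_mul_conjTranspose_same W, ?_⟩
  rw [Matrix.trace_mul_cycle, hW, Matrix.one_mul, hM.2]

end Aux

/-- a bipartite state is steerable by two unitary channels iff it is
steerable by two copies of the identity channel. -/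
theorem steerable_unitary_iff_id {n : ℕ} (hn : 1 ≤ n)
    (ρ : Matrix (Fin n × Fin n) (Fin n × Fin n) ℂ) (hρ : IsDensity ρ)
    (U V : Matrix (Fin n) (Fin n) ℂ)
    (hU : U ∈ Matrix.unitaryGroup (Fin n) ℂ) (hV : V ∈ Matrix.unitaryGroup (Fin n) ℂ) :
    (∃ σ : Matrix (Fin n × Fin n × Fin n) (Fin n × Fin n × Fin n) ℂ,
        IsDensity σ ∧
        ptrace3 σ = tmap id (fun X => U * X * Uᴴ) ρ ∧
        ptrace2 σ = tmap id (fun X => V * X * Vᴴ) ρ) ↔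
      (∃ σ' : Matrix (Fin n × Fin n × Fin n) (Fin n × Fin n × Fin n) ℂ,
        IsDensity σ' ∧ ptrace3 σ' = ρ ∧ ptrace2 σ' = ρ) := by
  have hU1 : Uᴴ * U = 1 := Matrix.mem_unitaryGroup_iff'.mp hU
  have hU2 : U * Uᴴ = 1 := Matrix.mem_unitaryGroup_iff.mp hU
  have hV1 : Vᴴ * V = 1 := Matrix.mem_unitaryGroup_iff'.mp hV
  have hV2 : V * Vᴴ = 1 := Matrix.mem_unitaryGroup_iff.mp hV
  constructor
  · rintro ⟨σ, hσd, h3, h2⟩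
    refine ⟨((1 : Matrix (Fin n) (Fin n) ℂ) ⊗ₖ (Uᴴ ⊗ₖ Vᴴ)) * σ
      * ((1 : Matrix (Fin n) (Fin n) ℂ) ⊗ₖ (Uᴴ ⊗ₖ Vᴴ))ᴴ, ?_, ?_, ?_⟩
    · exact isDensity_conj _ _ (kron3_unitary Uᴴ Vᴴ (by simpa using hU2) (by simpa using hV2)) hσd
    · rw [ptrace3_kron_conj Uᴴ Vᴴ (by simpa using hV2), h3, tmap_eq, kron_conjT, kron_conjT]
      simp only [Matrix.conjTranspose_one, Matrix.conjTranspose_conjTranspose]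
      calc ((1 : Matrix (Fin n) (Fin n) ℂ) ⊗ₖ Uᴴ) * (((1 : Matrix (Fin n) (Fin n) ℂ) ⊗ₖ U) * ρ
            * ((1 : Matrix (Fin n) (Fin n) ℂ) ⊗ₖ Uᴴ)) * ((1 : Matrix (Fin n) (Fin n) ℂ) ⊗ₖ U)
          = (((1 : Matrix (Fin n) (Fin n) ℂ) ⊗ₖ Uᴴ) * ((1 : Matrix (Fin n) (Fin n) ℂ) ⊗ₖ U)) * ρ
            * (((1 : Matrix (Fin n) (Fin n) ℂ) ⊗ₖ Uᴴ) * ((1 : Matrix (Fin n) (Fin n) ℂ) ⊗ₖ U)) := by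
            noncomm_ring
        _ = ρ := by
            rw [← Matrix.mul_kronecker_mul, hU1]
            simp [Matrix.one_kronecker_one]
    · rw [ptrace2_kron_conj Uᴴ Vᴴ (by simpa using hU2), h2, tmap_eq, kron_conjT, kron_conjT]
      simp only [Matrix.conjTranspose_one, Matrix.conjTranspose_conjTranspose]
      calc ((1 : Matrix (Fin n) (Fin n) ℂ) ⊗ₖ Vᴴ) * (((1 : Matrix (Fin n) (Fin n) ℂ) ⊗ₖ V) * ρ
            * ((1 : Matrix (Fin n) (Fin n) ℂ) ⊗ₖ Vᴴ)) * ((1 : Matrix (Fin n) (Fin n) ℂ) ⊗ₖ V)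
          = (((1 : Matrix (Fin n) (Fin n) ℂ) ⊗ₖ Vᴴ) * ((1 : Matrix (Fin n) (Fin n) ℂ) ⊗ₖ V)) * ρ
            * (((1 : Matrix (Fin n) (Fin n) ℂ) ⊗ₖ Vᴴ) * ((1 : Matrix (Fin n) (Fin n) ℂ) ⊗ₖ V)) := by
            noncomm_ring
        _ = ρ := by
            rw [← Matrix.mul_kronecker_mul, hV1]
            simp [Matrix.one_kronecker_one]
  · rintro ⟨σ', hσd, h3, h2⟩
    refine ⟨((1 : Matrix (Fin n) (Fin n) ℂ) ⊗ₖ (U ⊗ₖ V)) * σ'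
      * ((1 : Matrix (Fin n) (Fin n) ℂ) ⊗ₖ (U ⊗ₖ V))ᴴ, ?_, ?_, ?_⟩
    · exact isDensity_conj _ _ (kron3_unitary U V hU1 hV1) hσd
    · rw [ptrace3_kron_conj U V hV1, h3, tmap_eq]
    · rw [ptrace2_kron_conj U V hU1, h2, tmap_eq]

end
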